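/- Let p: [0,T] → ℝ solve the ODE p'(t) = 2γ(1 − p(t)/(σ + κ_t λ)) with p(0) = σ + λ, where κ_t = (T−t)/T and σ, λ, γ, T > 0. Then (p(T) − σ)/σ = Ψ(α, r), where r = λ/σ, α = 2γT/λ, and Ψ(α,r) = ∫₁^{1+r} u^{−α} du. -/

import Mathlib

/-- If `p` solves `p'(t) = 2γ(1 - p(t)/(σ + κ_t λ))` on `[0,T]`
with `p(0) = σ + λ` and `κ_t = (T-t)/T`, then
`(p(T) - σ)/σ = Ψ(α, r) = ∫₁^{1+r} u^{-α} du` with `r = λ/σ`, `α = 2γT/λ`. -/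
theorem stmt8 (σ lam γ T : ℝ) (hσ : 0 < σ) (hlam : 0 < lam) (hγ : 0 < γ)
    (hT : 0 < T) (p : ℝ → ℝ)
    (hp0 : p 0 = σ + lam)
    (hp : ∀ t ∈ Set.Icc (0 : ℝ) T,
      HasDerivAt p (2 * γ * (1 - p t / (σ + ((T - t) / T) * lam))) t) :
    (p T - σ) / σ = ∫ u in (1:ℝ)..(1 + lam / σ), u ^ (-(2 * γ * T / lam)) := by
  have hTne : T ≠ 0 := hT.ne'
  set α : ℝ := 2 * γ * T / lam with hαdef
  set d : ℝ → ℝ := fun t => σ + (T - t) / T * lam with hddef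
  have hdT : d T = σ := by simp [hddef]
  have hd0 : d 0 = σ + lam := by simp [hddef, hTne]
  have hdpos : ∀ t ∈ Set.Icc (0:ℝ) T, 0 < d t := by
    intro t ht
    have h1 : 0 ≤ (T - t) / T * lam :=
      mul_nonneg (div_nonneg (by linarith [ht.2]) hT.le) hlam.le
    simp only [hddef]; linarith
  have hdc : Continuous d := by
    simp only [hddef]; fun_prop
  have hd' : ∀ t : ℝ, HasDerivAt d (-(lam / T)) t := by
    intro t
    have h := (((hasDerivAt_id t).const_sub T).div_const T).mul_const lam
    have h2 := h.const_add σ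
    refine h2.congr_deriv (Eq.symm ?_)
    ring
  have hdeq : ∀ s : ℝ, d s = -(lam / T) * s + (σ + lam) := by
    intro s; simp only [hddef]; field_simp; ring
  have hp' : ∀ t ∈ Set.Icc (0:ℝ) T, HasDerivAt p (2 * γ * (1 - p t / d t)) t := hp
  have hαlam : lam / T * α = 2 * γ := by
    rw [hαdef]; field_simp
  clear_value α d
  clear hp hddef
  -- FTC for q t = p t * d t ^ (-α)
  have hq : ∀ t ∈ Set.uIcc (0:ℝ) T,
      HasDerivAt (fun t => p t * d t ^ (-α)) (2 * γ * d t ^ (-α)) t := by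
    intro t ht
    rw [Set.uIcc_of_le hT.le] at ht
    have hdt := hdpos t ht
    have h1 : HasDerivAt (fun t => d t ^ (-α)) (-(lam/T) * (-α) * d t ^ (-α - 1)) t :=
      (hd' t).rpow_const (Or.inl hdt.ne')
    have h2 := (hp' t ht).mul h1
    refine h2.congr_deriv (Eq.symm ?_)
    rw [show d t ^ (-α - 1) = d t ^ (-α) / d t by
      rw [Real.rpow_sub hdt, Real.rpow_one]]
    have hx : p t * (-(lam/T) * -α * (d t ^ (-α) / d t))
        = 2 * γ * (p t / d t) * d t ^ (-α) := by
      rw [← hαlam]; field_simp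
    rw [hx]
    field_simp
    ring
  have hfint : IntervalIntegrable (fun s => 2 * γ * d s ^ (-α)) MeasureTheory.volume 0 T := by
    apply ContinuousOn.intervalIntegrable
    rw [Set.uIcc_of_le hT.le]
    exact continuousOn_const.mul (hdc.continuousOn.rpow_const
      (fun t ht => Or.inl (hdpos t ht).ne'))
  have hFTC := intervalIntegral.integral_eq_sub_of_hasDerivAt hq hfint
  rw [hdT, hd0, hp0] at hFTC
  -- Substitution 1 : s ↦ -(lam/T) * s + (σ + lam)
  have hc : -(lam/T) ≠ 0 := neg_ne_zero.mpr (div_ne_zero hlam.ne' hTne)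
  have hsub1 : (∫ s in (0:ℝ)..T, 2 * γ * d s ^ (-α))
      = (T / lam) * ∫ u in σ..(σ + lam), 2 * γ * u ^ (-α) := by
    have h1 : (∫ s in (0:ℝ)..T, 2 * γ * d s ^ (-α))
        = ∫ s in (0:ℝ)..T, (fun u => 2 * γ * u ^ (-α)) (-(lam/T) * s + (σ + lam)) := by
      apply intervalIntegral.integral_congr
      intro s _
      simp only [hdeq s]
    rw [h1, intervalIntegral.integral_comp_mul_add (fun u => 2 * γ * u ^ (-α)) hc (σ + lam)]
    have hb1 : -(lam/T) * 0 + (σ + lam) = σ + lam := by ring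
    have hb2 : -(lam/T) * T + (σ + lam) = σ := by field_simp; ring
    rw [hb1, hb2, intervalIntegral.integral_symm, smul_eq_mul]
    have hinv : (-(lam/T))⁻¹ = -(T/lam) := by rw [← neg_inv, inv_div]
    rw [hinv]
    ring
  -- Substitution 2 : u ↦ σ * x
  have hsub2 : (∫ u in σ..(σ + lam), 2 * γ * u ^ (-α))
      = σ * (2 * γ * σ ^ (-α)) * ∫ u in (1:ℝ)..(1 + lam/σ), u ^ (-α) := by
    have h1 : (∫ x in (1:ℝ)..(1 + lam/σ), (fun u => 2 * γ * u ^ (-α)) (σ * x))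
        = σ⁻¹ • ∫ u in (σ * 1)..(σ * (1 + lam/σ)), 2 * γ * u ^ (-α) :=
      intervalIntegral.integral_comp_mul_left (fun u => 2 * γ * u ^ (-α)) hσ.ne'
    have hb : σ * (1 + lam/σ) = σ + lam := by field_simp
    rw [mul_one, hb, smul_eq_mul] at h1
    have h2 : (∫ x in (1:ℝ)..(1 + lam/σ), (fun u => 2 * γ * u ^ (-α)) (σ * x))
        = ∫ x in (1:ℝ)..(1 + lam/σ), 2 * γ * σ ^ (-α) * x ^ (-α) := by
      apply intervalIntegral.integral_congr
      intro x hx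
      rw [Set.uIcc_of_le (by have := div_pos hlam hσ; linarith)] at hx
      have hx0 : (0:ℝ) ≤ x := by linarith [hx.1]
      simp only
      rw [Real.mul_rpow hσ.le hx0]
      ring
    rw [h2, intervalIntegral.integral_const_mul] at h1
    calc (∫ u in σ..(σ + lam), 2 * γ * u ^ (-α))
        = σ * (σ⁻¹ * ∫ u in σ..(σ + lam), 2 * γ * u ^ (-α)) := by
          rw [← mul_assoc, mul_inv_cancel₀ hσ.ne', one_mul]
      _ = σ * (2 * γ * σ ^ (-α) * ∫ u in (1:ℝ)..(1 + lam/σ), u ^ (-α)) := by rw [← h1]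
      _ = σ * (2 * γ * σ ^ (-α)) * ∫ u in (1:ℝ)..(1 + lam/σ), u ^ (-α) := by ring
  set Ψ : ℝ := ∫ u in (1:ℝ)..(1 + lam/σ), u ^ (-α) with hΨ
  -- key closed-form identity
  have hr1 : (1:ℝ) ≤ 1 + lam/σ := by have := div_pos hlam hσ; linarith
  have hkey : (1 - α) * Ψ = (1 + lam/σ) ^ (1 - α) - 1 := by
    by_cases h1 : α = 1
    · simp [h1]
    · have hne : (-α : ℝ) ≠ -1 := fun h => h1 (neg_injective h)
      have hmem : (0:ℝ) ∉ Set.uIcc 1 (1 + lam/σ) := by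
        rw [Set.uIcc_of_le hr1]
        intro h
        linarith [h.1]
      rw [hΨ, integral_rpow (Or.inr ⟨hne, hmem⟩), Real.one_rpow]
      have h2 : (-α) + 1 = 1 - α := by ring
      rw [h2]
      have h3 : (1:ℝ) - α ≠ 0 := fun h => h1 (by linarith)
      field_simp
  -- combine
  have hA : (0:ℝ) < σ ^ (-α) := Real.rpow_pos_of_pos hσ _
  have hB : (σ + lam) * (σ + lam) ^ (-α) = σ * σ ^ (-α) * (1 + lam/σ) ^ (1 - α) := by
    have h1 : σ + lam = σ * (1 + lam/σ) := by field_simp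
    have h2 : (0:ℝ) < 1 + lam/σ := by linarith
    rw [h1, Real.mul_rpow hσ.le h2.le]
    rw [show (1:ℝ) - α = 1 + (-α) by ring, Real.rpow_add h2, Real.rpow_one]
    ring
  rw [hsub1, hsub2, hB] at hFTC
  have hα2 : T / lam * (σ * (2 * γ * σ ^ (-α)) * Ψ) = α * σ * σ ^ (-α) * Ψ := by
    rw [hαdef]; field_simp
  rw [hα2] at hFTC
  have hPT : p T = σ * Ψ + σ := by
    have h1 : p T * σ ^ (-α) = (σ * Ψ + σ) * σ ^ (-α) := by
      have h5 : σ * σ ^ (-α) * ((1 - α) * Ψ + 1)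
          = σ * σ ^ (-α) * (1 + lam/σ) ^ (1 - α) := by
        rw [hkey]; ring
      linear_combination -hFTC - h5
    exact mul_right_cancel₀ hA.ne' h1
  rw [hPT]
  field_simp
  ring
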